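/- The map sending a rational subtraction-free expression to its tropicalization, defined by replacing addition with minimum, multiplication with addition, and division with subtraction, is a well-defined homomorphism of semifields from the semifield of subtraction-free rational expressions in variables t_1,...,t_N (with usual + and ×) to the semifield of functions Z^N → Z (with pointwise min as addition and pointwise + as multiplication), sending each variable t_i to the i-th coordinate projection. -/

import Mathlib

open MvPolynomial

/-- Subtraction-free rational expressions: the smallest subset of the field of
rational functions containing the variables and closed under `+`, `*`, `/`. -/
inductive IsSF (N : ℕ) : FractionRing (MvPolynomial (Fin N) ℚ) → Prop
  | var (i : Fin N) :
      IsSF N (algebraMap (MvPolynomial (Fin N) ℚ) (FractionRing (MvPolynomial (Fin N) ℚ)) (X i))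
  | add {f g} : IsSF N f → IsSF N g → IsSF N (f + g)
  | mul {f g} : IsSF N f → IsSF N g → IsSF N (f * g)
  | div {f g} : IsSF N f → IsSF N g → IsSF N (f / g)

namespace TropAux

open HahnSeries

/-- The value group. -/
abbrev G (N : ℕ) := ℤ ×ₗ Lex (Fin N → ℤ)

variable {N : ℕ}

lemma fst_min (a b : G N) : (ofLex (min a b)).1 = min (ofLex a).1 (ofLex b).1 := by
  rcases le_total a b with h | h
  · rw [min_eq_left h]; exact (min_eq_left (Prod.Lex.monotone_fst a b h)).symm
  · rw [min_eq_right h]; exact (min_eq_right (Prod.Lex.monotone_fst b a h)).symm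

/-- Image of the variable `t i`. -/
def gam (t : Fin N → ℤ) (i : Fin N) : G N := toLex (t i, toLex (Pi.single i 1))

/-- Evaluation of polynomials into Hahn series. -/
noncomputable def psi (t : Fin N → ℤ) : MvPolynomial (Fin N) ℚ →+* HahnSeries (G N) ℚ :=
  eval₂Hom HahnSeries.C fun i => HahnSeries.single (gam t i) 1

/-- The exponent map on monomials. -/
def sig (t : Fin N → ℤ) (m : Fin N →₀ ℕ) : G N := m.sum fun i k => k • gam t i

/-- Second-component evaluation, as an additive map. -/
def ev (j : Fin N) : G N →+ ℤ where
  toFun g := ofLex (ofLex g).2 j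
  map_zero' := rfl
  map_add' _ _ := rfl

lemma ev_sig (t : Fin N → ℤ) (j : Fin N) (m : Fin N →₀ ℕ) : ev j (sig t m) = m j := by
  rw [sig, map_finsuppSum]
  have h : ∀ i ∈ m.support, ev j (m i • gam t i) = if j = i then ((m i : ℕ) : ℤ) else 0 := by
    intro i _
    have h1 : ev j (gam t i) = Pi.single (M := fun _ => ℤ) i 1 j := rfl
    rw [AddMonoidHom.map_nsmul, h1, Pi.single_apply]
    by_cases h : j = i <;> simp [h]
  rw [show (m.sum fun a b => ev j (b • gam t a))
        = m.sum fun x v => if j = x then ((v : ℕ) : ℤ) else 0 from Finsupp.sum_congr h,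
    Finsupp.sum_ite_eq]
  by_cases hj : j ∈ m.support
  · rw [if_pos hj]
  · rw [if_neg hj, Finsupp.notMem_support_iff.mp hj, Nat.cast_zero]

lemma sig_inj (t : Fin N → ℤ) : Function.Injective (sig t) := by
  intro m m' h
  ext j
  have h2 := congrArg (ev j) h
  rw [ev_sig, ev_sig] at h2
  exact_mod_cast h2

lemma prod_single {α : Type*} (s : Finset α) (a : α → G N) :
    (∏ i ∈ s, HahnSeries.single (a i) (1 : ℚ)) = HahnSeries.single (∑ i ∈ s, a i) 1 := by
  classical
  induction s using Finset.induction with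
  | empty => simp [single_zero_one]
  | insert _ _ hx ih =>
      rw [Finset.prod_insert hx, Finset.sum_insert hx, ih, single_mul_single, mul_one]

lemma psi_monomial (t : Fin N → ℤ) (m : Fin N →₀ ℕ) (c : ℚ) :
    psi t (monomial m c) = HahnSeries.single (sig t m) c := by
  rw [psi, eval₂Hom_monomial]
  simp only [single_pow, one_pow]
  rw [Finsupp.prod, prod_single, HahnSeries.C_apply, single_mul_single, zero_add, mul_one]
  rfl

/-- Coefficient extraction as an additive map. -/
def coeffHom (g : G N) : HahnSeries (G N) ℚ →+ ℚ where
  toFun x := x.coeff g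
  map_zero' := rfl
  map_add' _ _ := rfl

lemma psi_inj (t : Fin N → ℤ) : Function.Injective (psi t) := by
  rw [injective_iff_map_eq_zero]
  intro p hp
  by_contra h
  obtain ⟨m, hm⟩ := MvPolynomial.support_nonempty.mpr h
  have key : (psi t p).coeff (sig t m) = MvPolynomial.coeff m p := by
    conv_lhs => rw [← MvPolynomial.support_sum_monomial_coeff p]
    have hc : ∀ g : HahnSeries (G N) ℚ, g.coeff (sig t m) = coeffHom (sig t m) g := fun _ => rfl
    rw [map_sum, hc, map_sum]
    have h2 : ∀ v ∈ p.support,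
        coeffHom (N := N) (sig t m) (psi t (monomial v (MvPolynomial.coeff v p)))
          = if v = m then MvPolynomial.coeff v p else 0 := by
      intro v _
      rw [psi_monomial]
      show (HahnSeries.single (sig t v) (MvPolynomial.coeff v p)).coeff (sig t m) = _
      rw [HahnSeries.coeff_single]
      by_cases hv : v = m
      · simp [hv]
      · have hne : sig t m ≠ sig t v := fun hc' => hv ((sig_inj t) hc'.symm)
        rw [if_neg hne, if_neg hv]
    rw [Finset.sum_congr rfl h2,
      Finset.sum_ite_eq' p.support m (fun v => MvPolynomial.coeff v p), if_pos hm]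
  rw [hp] at key
  simp only [HahnSeries.coeff_zero] at key
  exact (MvPolynomial.mem_support_iff.mp hm) key.symm

/-- The evaluation on the fraction field. -/
noncomputable def Phi (t : Fin N → ℤ) :
    FractionRing (MvPolynomial (Fin N) ℚ) →+* HahnSeries (G N) ℚ :=
  IsFractionRing.lift (psi_inj t)

lemma lc_eq_coeff_order {x : HahnSeries (G N) ℚ} (hx : x ≠ 0) :
    x.leadingCoeff = x.coeff x.order := by
  exact leadingCoeff_eq

lemma add_left {x y : HahnSeries (G N) ℚ} (hx : 0 < x.leadingCoeff) (hy0 : y ≠ 0)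
    (h : x.order < y.order) :
    0 < (x + y).leadingCoeff ∧ (x + y).order = min x.order y.order := by
  have hx0 : x ≠ 0 := leadingCoeff_ne_zero.mp hx.ne'
  have hT : x.orderTop < y.orderTop := by
    rw [← order_eq_orderTop_of_ne_zero hx0, ← order_eq_orderTop_of_ne_zero hy0]
    exact_mod_cast WithTop.coe_lt_coe.mpr h
  have hpos : 0 < (x + y).leadingCoeff := (leadingCoeff_add_eq_left hT) ▸ hx
  have hne : x + y ≠ 0 := leadingCoeff_ne_zero.mp hpos.ne'
  refine ⟨hpos, WithTop.coe_injective ?_⟩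
  rw [order_eq_orderTop_of_ne_zero hne, orderTop_add_eq_left hT, ← order_eq_orderTop_of_ne_zero hx0,
    min_eq_left h.le]

lemma add_stuff {x y : HahnSeries (G N) ℚ} (hx : 0 < x.leadingCoeff) (hy : 0 < y.leadingCoeff) :
    0 < (x + y).leadingCoeff ∧ (x + y).order = min x.order y.order := by
  have hx0 : x ≠ 0 := leadingCoeff_ne_zero.mp hx.ne'
  have hy0 : y ≠ 0 := leadingCoeff_ne_zero.mp hy.ne'
  rcases lt_trichotomy x.order y.order with h | h | h
  · exact add_left hx hy0 h
  · have hco : (x + y).coeff x.order = x.leadingCoeff + y.leadingCoeff := by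
      show x.coeff x.order + y.coeff x.order = _
      rw [← lc_eq_coeff_order hx0, h, ← lc_eq_coeff_order hy0]
    have hpos' : (0 : ℚ) < x.leadingCoeff + y.leadingCoeff := add_pos hx hy
    have hne : x + y ≠ 0 := fun h0 =>
      hpos'.ne' (by rw [← hco, h0, HahnSeries.coeff_zero])
    have hle : (x + y).order ≤ x.order :=
      order_le_of_coeff_ne_zero (g := x.order) (by rw [hco]; exact hpos'.ne')
    have hge : x.order ≤ (x + y).order := by
      by_contra hlt
      push_neg at hlt
      have c1 : x.coeff ((x + y).order) = 0 := coeff_eq_zero_of_lt_order hlt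
      have c2 : y.coeff ((x + y).order) = 0 := coeff_eq_zero_of_lt_order (h ▸ hlt)
      exact (coeff_order_eq_zero.not.mpr hne) (by show x.coeff _ + y.coeff _ = 0; rw [c1, c2, add_zero])
    have horder : (x + y).order = x.order := le_antisymm hle hge
    refine ⟨?_, by rw [horder, h, min_self]⟩
    rw [lc_eq_coeff_order hne, horder, hco]
    exact hpos'
  · have h2 := add_left hy hx0 h
    rw [add_comm y x, min_comm y.order x.order] at h2
    exact h2

lemma mul_stuff {x y : HahnSeries (G N) ℚ} (hx : 0 < x.leadingCoeff) (hy : 0 < y.leadingCoeff) :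
    0 < (x * y).leadingCoeff ∧ (x * y).order = x.order + y.order := by
  have hx0 : x ≠ 0 := leadingCoeff_ne_zero.mp hx.ne'
  have hy0 : y ≠ 0 := leadingCoeff_ne_zero.mp hy.ne'
  have hne : x * y ≠ 0 := mul_ne_zero hx0 hy0
  have ho : (x * y).order = x.order + y.order := order_mul hx0 hy0
  refine ⟨?_, ho⟩
  rw [lc_eq_coeff_order hne, ho, coeff_mul_order_add_order]
  exact mul_pos hx hy

lemma inv_stuff {y : HahnSeries (G N) ℚ} (hy : 0 < y.leadingCoeff) :
    0 < y⁻¹.leadingCoeff ∧ y⁻¹.order = -y.order := by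
  have hy0 : y ≠ 0 := leadingCoeff_ne_zero.mp hy.ne'
  have hi0 : y⁻¹ ≠ 0 := inv_ne_zero hy0
  have h1 : y * y⁻¹ = 1 := mul_inv_cancel₀ hy0
  have hol : y.order + y⁻¹.order = 0 :=
    (order_mul hy0 hi0).symm.trans (by rw [h1]; exact order_one)
  have hlc : y.leadingCoeff * y⁻¹.leadingCoeff = 1 := by
    have h2 := coeff_mul_order_add_order y y⁻¹
    rw [h1, hol, HahnSeries.coeff_one, if_pos rfl] at h2
    exact h2.symm
  refine ⟨?_, eq_neg_of_add_eq_zero_right hol⟩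
  rw [eq_inv_of_mul_eq_one_right hlc]
  exact inv_pos.mpr hy

lemma div_stuff {x y : HahnSeries (G N) ℚ} (hx : 0 < x.leadingCoeff) (hy : 0 < y.leadingCoeff) :
    0 < (x / y).leadingCoeff ∧ (x / y).order = x.order - y.order := by
  rw [div_eq_mul_inv]
  obtain ⟨h1, h2⟩ := inv_stuff hy
  obtain ⟨h3, h4⟩ := mul_stuff hx h1
  exact ⟨h3, by rw [h4, h2, sub_eq_add_neg]⟩

lemma Phi_var (t : Fin N → ℤ) (i : Fin N) :
    Phi t (algebraMap (MvPolynomial (Fin N) ℚ) (FractionRing (MvPolynomial (Fin N) ℚ)) (X i))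
      = HahnSeries.single (gam t i) 1 := by
  rw [Phi, IsFractionRing.lift_algebraMap]
  rw [psi, eval₂Hom_X']

lemma phi_pos (t : Fin N → ℤ) {f : FractionRing (MvPolynomial (Fin N) ℚ)} (hf : IsSF N f) :
    0 < (Phi t f).leadingCoeff := by
  induction hf with
  | var i =>
      rw [Phi_var, leadingCoeff_of_single]
      norm_num
  | add hf hg ihf ihg => rw [RingHom.map_add (Phi t)]; exact (add_stuff ihf ihg).1
  | mul hf hg ihf ihg => rw [map_mul]; exact (mul_stuff ihf ihg).1
  | div hf hg ihf ihg => rw [map_div₀]; exact (div_stuff ihf ihg).1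

/-- The tropicalization map. -/
noncomputable def T (N : ℕ) :
    {f : FractionRing (MvPolynomial (Fin N) ℚ) // IsSF N f} → ((Fin N → ℤ) → ℤ) :=
  fun f t => (ofLex ((Phi t f.1).order)).1

lemma T_var (i : Fin N) : T N ⟨_, IsSF.var i⟩ = fun t => t i := by
  funext t
  show (ofLex ((Phi t _).order)).1 = t i
  rw [Phi_var, order_single one_ne_zero]
  rfl

lemma T_add (f g : {f : FractionRing (MvPolynomial (Fin N) ℚ) // IsSF N f}) :
    T N ⟨f.1 + g.1, IsSF.add f.2 g.2⟩ = fun t => min (T N f t) (T N g t) := by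
  funext t
  show (ofLex ((Phi t (f.1 + g.1)).order)).1 = _
  rw [RingHom.map_add (Phi t), (add_stuff (phi_pos t f.2) (phi_pos t g.2)).2, fst_min]
  rfl

lemma T_mul (f g : {f : FractionRing (MvPolynomial (Fin N) ℚ) // IsSF N f}) :
    T N ⟨f.1 * g.1, IsSF.mul f.2 g.2⟩ = fun t => T N f t + T N g t := by
  funext t
  show (ofLex ((Phi t (f.1 * g.1)).order)).1 = _
  rw [map_mul, (mul_stuff (phi_pos t f.2) (phi_pos t g.2)).2]
  rfl

lemma T_div (f g : {f : FractionRing (MvPolynomial (Fin N) ℚ) // IsSF N f}) :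
    T N ⟨f.1 / g.1, IsSF.div f.2 g.2⟩ = fun t => T N f t - T N g t := by
  funext t
  show (ofLex ((Phi t (f.1 / g.1)).order)).1 = _
  rw [map_div₀, (div_stuff (phi_pos t f.2) (phi_pos t g.2)).2]
  rfl

end TropAux

/-- The tropicalization map is a well-defined homomorphism of semifields from the
semifield of subtraction-free rational expressions in `t_1, …, t_N` (usual `+`, `×`)
to the semifield of functions `ℤ^N → ℤ` (pointwise `min` as addition, pointwise `+`
as multiplication, pointwise `-` as division), sending `t_i` to the `i`-th projection. -/
theorem tropicalization_exists_unique (N : ℕ) :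
    ∃! T : {f : FractionRing (MvPolynomial (Fin N) ℚ) // IsSF N f} → ((Fin N → ℤ) → ℤ),
      (∀ i : Fin N, T ⟨_, IsSF.var i⟩ = fun t => t i) ∧
      (∀ f g : {f // IsSF N f},
        T ⟨f.1 + g.1, IsSF.add f.2 g.2⟩ = fun t => min (T f t) (T g t)) ∧
      (∀ f g : {f // IsSF N f},
        T ⟨f.1 * g.1, IsSF.mul f.2 g.2⟩ = fun t => T f t + T g t) ∧
      (∀ f g : {f // IsSF N f},
        T ⟨f.1 / g.1, IsSF.div f.2 g.2⟩ = fun t => T f t - T g t) := by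
  refine ⟨TropAux.T N, ⟨TropAux.T_var, TropAux.T_add, TropAux.T_mul, TropAux.T_div⟩, ?_⟩
  rintro T' ⟨h1, h2, h3, h4⟩
  funext f
  obtain ⟨f, hf⟩ := f
  induction hf with
  | var i => exact (h1 i).trans (TropAux.T_var i).symm
  | @add f g hf hg ihf ihg =>
      show T' ⟨f + g, IsSF.add hf hg⟩ = TropAux.T N ⟨f + g, IsSF.add hf hg⟩
      calc T' ⟨f + g, IsSF.add hf hg⟩
          = fun t => min (T' ⟨f, hf⟩ t) (T' ⟨g, hg⟩ t) := h2 ⟨f, hf⟩ ⟨g, hg⟩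
        _ = fun t => min (TropAux.T N ⟨f, hf⟩ t) (TropAux.T N ⟨g, hg⟩ t) := by rw [ihf, ihg]
        _ = TropAux.T N ⟨f + g, IsSF.add hf hg⟩ := (TropAux.T_add ⟨f, hf⟩ ⟨g, hg⟩).symm
  | @mul f g hf hg ihf ihg =>
      show T' ⟨f * g, IsSF.mul hf hg⟩ = TropAux.T N ⟨f * g, IsSF.mul hf hg⟩
      calc T' ⟨f * g, IsSF.mul hf hg⟩
          = fun t => T' ⟨f, hf⟩ t + T' ⟨g, hg⟩ t := h3 ⟨f, hf⟩ ⟨g, hg⟩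
        _ = fun t => TropAux.T N ⟨f, hf⟩ t + TropAux.T N ⟨g, hg⟩ t := by rw [ihf, ihg]
        _ = TropAux.T N ⟨f * g, IsSF.mul hf hg⟩ := (TropAux.T_mul ⟨f, hf⟩ ⟨g, hg⟩).symm
  | @div f g hf hg ihf ihg =>
      show T' ⟨f / g, IsSF.div hf hg⟩ = TropAux.T N ⟨f / g, IsSF.div hf hg⟩
      calc T' ⟨f / g, IsSF.div hf hg⟩
          = fun t => T' ⟨f, hf⟩ t - T' ⟨g, hg⟩ t := h4 ⟨f, hf⟩ ⟨g, hg⟩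
        _ = fun t => TropAux.T N ⟨f, hf⟩ t - TropAux.T N ⟨g, hg⟩ t := by rw [ihf, ihg]
        _ = TropAux.T N ⟨f / g, IsSF.div hf hg⟩ := (TropAux.T_div ⟨f, hf⟩ ⟨g, hg⟩).symm
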